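/- For every uncountable set T of conditions in the localization partial order 𝕃 there exist a finite sequence σ and an uncountable subset T′ ⊆ T such that every element of T′ has first coordinate σ, and for every ℓ ∈ ℕ there is a subset F ⊆ T′ of cardinality ℓ which has a common lower bound in 𝕃. -/

import Mathlib

noncomputable section

/-- A condition of the localization partial order `𝕃`: a pair `(σ, G)` where `σ` is a finite
sequence of finite sets of naturals with `|σ(i)| = i + 1`, and `G` is a finite set of functions
`ℕ → ℕ` with `|G| ≤ |σ| + 1`. -/
structure LCond where
  /-- the finite sequence of finite "slaloms" -/
  σ : List (Finset ℕ)
  /-- the finite set of functions to be localized -/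
  G : Finset (ℕ → ℕ)
  hσ : ∀ i : ℕ, ∀ h : i < σ.length, (σ.get ⟨i, h⟩).card = i + 1
  hG : G.card ≤ σ.length + 1

/-- The order of `𝕃`: `(σ,G) ≤ (τ,H)` iff `σ ⊇ τ`, `G ⊇ H`, and `g(i) ∈ σ(i)` for every
`g ∈ H` and every `i` with `|τ| ≤ i < |σ|`. -/
def LLe (p q : LCond) : Prop :=
  q.σ <+: p.σ ∧ q.G ⊆ p.G ∧
    ∀ g ∈ q.G, ∀ i : ℕ, q.σ.length ≤ i → ∀ h : i < p.σ.length, g i ∈ p.σ.get ⟨i, h⟩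

/-- The condition `(⟨⟩, {f})` of `𝕃` with empty sequence and a single function. -/
def LCond.single (f : ℕ → ℕ) : LCond :=
  ⟨[], {f}, fun i h => absurd h (by simp), by simp⟩

open Classical in
lemma L_fiber_lemma {α β : Type*} [Countable β] (f : α → β) (S : Set α)
    (h : ¬ S.Countable) : ∃ b, ¬ (S ∩ f ⁻¹' {b}).Countable := by
  by_contra hc
  push_neg at hc
  apply h
  have : S = ⋃ b, S ∩ f ⁻¹' {b} := by
    ext x; simp
  rw [this]
  exact Set.countable_iUnion hc

/-- For every uncountable set `T` of conditions of `𝕃` there are a finite sequence `s` and an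
uncountable `T' ⊆ T` all of whose elements have first coordinate `s`, such that for every
`ℓ` some `F ⊆ T'` of cardinality `ℓ` has a common lower bound in `𝕃`. -/
theorem L_uncountable_has_centered_refinement
    (T : Set LCond) (hunc : ¬ T.Countable) :
    ∃ (s : List (Finset ℕ)) (T' : Set LCond), T' ⊆ T ∧ ¬ T'.Countable ∧
      (∀ p ∈ T', p.σ = s) ∧
      ∀ ℓ : ℕ, ∃ F ⊆ T', F.Finite ∧ F.ncard = ℓ ∧ ∃ q : LCond, ∀ p ∈ F, LLe q p := by
  classical
  obtain ⟨s, hs⟩ := L_fiber_lemma (fun p : LCond => p.σ) T hunc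
  set T' := T ∩ (fun p : LCond => p.σ) ⁻¹' {s} with hT'def
  have hmemσ : ∀ p ∈ T', p.σ = s := fun p hp => hp.2
  refine ⟨s, T', Set.inter_subset_left, hs, hmemσ, fun ℓ => ?_⟩
  have hT'ne : T'.Nonempty :=
    Set.nonempty_iff_ne_empty.mpr (fun h => hs (h ▸ Set.countable_empty))
  obtain ⟨pw, hpw⟩ := hT'ne
  have hsσ : ∀ i : ℕ, ∀ h : i < s.length, (s.get ⟨i, h⟩).card = i + 1 := by
    have := pw.hσ
    rwa [hmemσ pw hpw] at this
  set n := s.length with hn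
  set m := ℓ * (n + 1) with hm
  obtain ⟨R, hR⟩ :=
    L_fiber_lemma (fun p : LCond => p.G.image (fun g => (fun j : Fin m => g j))) T' hs
  have hinf : (T' ∩ (fun p : LCond => p.G.image (fun g => (fun j : Fin m => g j))) ⁻¹'
      {R}).Infinite := fun h => hR h.countable
  obtain ⟨t, htsub, htcard⟩ := hinf.exists_subset_card_eq ℓ
  have htprop : ∀ p ∈ t, p.σ = s ∧ p.G.image (fun g => (fun j : Fin m => g j)) = R := by
    intro p hp
    have h1 := htsub hp
    exact ⟨h1.1.2, h1.2⟩
  set Gq : Finset (ℕ → ℕ) := t.biUnion (fun p => p.G) with hGq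
  have hGqcard : Gq.card ≤ m := by
    calc Gq.card ≤ ∑ p ∈ t, p.G.card := Finset.card_biUnion_le
      _ ≤ ∑ _p ∈ t, (n + 1) := Finset.sum_le_sum (fun p hp => by
          have h1 := (htprop p hp).1
          have h2 := p.hG
          rw [h1] at h2
          exact h2)
      _ = ℓ * (n + 1) := by rw [Finset.sum_const, htcard, smul_eq_mul]
  have key : ∀ i : ℕ, n ≤ i → i < m → (Gq.image (fun g => g i)).card ≤ i + 1 := by
    intro i hni him
    have hℓpos : 0 < ℓ := by
      by_contra h
      push_neg at h
      have hl0 : ℓ = 0 := by omega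
      rw [hm, hl0, Nat.zero_mul] at him
      omega
    have htne : t.Nonempty := by
      rw [← Finset.card_pos, htcard]; exact hℓpos
    obtain ⟨p₀, hp₀⟩ := htne
    have hsub : Gq.image (fun g => g i) ⊆ p₀.G.image (fun g => g i) := by
      intro x hx
      simp only [Finset.mem_image, hGq, Finset.mem_biUnion] at hx ⊢
      obtain ⟨g, ⟨p, hp, hgp⟩, rfl⟩ := hx
      have h1 : (fun j : Fin m => g j) ∈ R := by
        rw [← (htprop p hp).2]
        exact Finset.mem_image_of_mem _ hgp
      rw [← (htprop p₀ hp₀).2] at h1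
      obtain ⟨g₀, hg₀, hgg⟩ := Finset.mem_image.mp h1
      exact ⟨g₀, hg₀, congrFun hgg ⟨i, him⟩⟩
    calc (Gq.image (fun g => g i)).card ≤ (p₀.G.image (fun g => g i)).card :=
          Finset.card_le_card hsub
      _ ≤ p₀.G.card := Finset.card_image_le
      _ ≤ n + 1 := by
          have h2 := p₀.hG
          rw [(htprop p₀ hp₀).1] at h2
          exact h2
      _ ≤ i + 1 := by omega
  have hc : ∀ i : ℕ, n ≤ i ∧ i < m →
      ∃ C : Finset ℕ, Gq.image (fun g => g i) ⊆ C ∧ C.card = i + 1 :=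
    fun i h => Infinite.exists_superset_card_eq _ _ (key i h.1 h.2)
  set c : ℕ → Finset ℕ := fun i =>
    if h : n ≤ i ∧ i < m then (hc i h).choose else ∅ with hcdef
  have hcspec : ∀ i : ℕ, n ≤ i → i < m →
      Gq.image (fun g => g i) ⊆ c i ∧ (c i).card = i + 1 := by
    intro i h1 h2
    simp only [hcdef, dif_pos (And.intro h1 h2)]
    exact (hc i ⟨h1, h2⟩).choose_spec
  set L : List (Finset ℕ) := List.ofFn (fun j : Fin (m - n) => c (n + j)) with hLdef
  have hlenL : L.length = m - n := List.length_ofFn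
  have hlen : (s ++ L).length = n + (m - n) := by
    rw [List.length_append, hlenL]
  have hget : ∀ i : ℕ, n ≤ i → ∀ h : i < (s ++ L).length, (s ++ L).get ⟨i, h⟩ = c i := by
    intro i hni h
    have him : i - n < m - n := by
      rw [hlen] at h; omega
    have hsl : s.length ≤ i := hni
    rw [List.get_eq_getElem, List.getElem_append_right hsl]
    simp only [hLdef, List.getElem_ofFn]
    congr 1
    omega
  have hσq : ∀ i : ℕ, ∀ h : i < (s ++ L).length, ((s ++ L).get ⟨i, h⟩).card = i + 1 := by
    intro i h
    rcases lt_or_ge i n with hin | hin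
    · have : (s ++ L).get ⟨i, h⟩ = s.get ⟨i, hin⟩ := by
        simp only [List.get_eq_getElem]
        exact List.getElem_append_left hin
      rw [this]
      exact hsσ i hin
    · have him : i < m := by
        rw [hlen] at h; omega
      rw [hget i hin h]
      exact (hcspec i hin him).2
  have hGqlen : Gq.card ≤ (s ++ L).length + 1 := by
    rw [hlen]; omega
  refine ⟨↑t, fun p hp => (htsub hp).1, t.finite_toSet,
    by rw [Set.ncard_coe_finset, htcard], ⟨s ++ L, Gq, hσq, hGqlen⟩, ?_⟩
  intro p hp
  have hp' : p ∈ t := hp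
  have hpσ : p.σ = s := (htprop p hp').1
  refine ⟨by rw [hpσ]; exact List.prefix_append s L,
    fun g hg => Finset.mem_biUnion.mpr ⟨p, hp', hg⟩, ?_⟩
  intro g hg i hi h
  rw [hpσ] at hi
  have him : i < m := by
    rw [hlen] at h
    have : n ≤ i := hi
    omega
  rw [hget i hi h]
  exact (hcspec i hi him).1
    (Finset.mem_image_of_mem _ (Finset.mem_biUnion.mpr ⟨p, hp', hg⟩))

end
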